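/- If x ∈ D, then the point (x, f(x)) does not have a neighbourhood basis in the graph G of clopen sets: there is a neighbourhood N of (x, f(x)) in G such that no subset of G that is clopen in G satisfies (x, f(x)) ∈ U ⊆ N (so the small inductive dimension of G at (x, f(x)) is at least 1). -/

import Mathlib

open Set Topology

/-- The Cantor space `2^ℕ`, with coordinates indexed by the positive integers. -/
abbrev Cant : Type := ℕ+ → Bool

/-- The support of a point of the Cantor space, as a set of (positive) natural numbers. -/
def ksupp (x : Cant) : Set ℕ := {i | ∃ h : 0 < i, x ⟨i, h⟩ = true}

open scoped Classical in
/-- Kuratowski's function `f(x) = Σ_j (−1)^{c_x(j)} 2^{−j}`, where `c_x` enumerates the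
support of `x` in increasing order; here the summation index `j : ℕ` is the 0-based
version of the paper's 1-based position index, so the weight is `2^{−(j+1)}`. -/
noncomputable def kf (x : Cant) : ℝ :=
  ∑' j : ℕ, if (ksupp x).Infinite ∨ j < (ksupp x).ncard then
    (-1 : ℝ) ^ (Nat.nth (· ∈ ksupp x) j) * (2 : ℝ) ^ (-(j + 1 : ℤ)) else 0

open Filter
open scoped Classical

noncomputable abbrev KG := {p : Cant × ℝ // p.2 = kf p.1}

noncomputable def mkG (y : Cant) : KG := ⟨(y, kf y), rfl⟩

noncomputable def kterm (y : Cant) (j : ℕ) : ℝ :=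
  (-1 : ℝ) ^ (Nat.nth (· ∈ ksupp y) j) * (2 : ℝ) ^ (-(j + 1 : ℤ))

lemma kterm_def (y : Cant) (j : ℕ) :
    kterm y j = (-1 : ℝ) ^ (Nat.nth (fun m => m ∈ ksupp y) j) * (2 : ℝ) ^ (-(j + 1 : ℤ)) := rfl

lemma two_zpow_eq (j : ℕ) : (2 : ℝ) ^ (-(j + 1 : ℤ)) = (1/2 : ℝ) ^ (j+1) := by
  rw [one_div, inv_pow, ← zpow_natCast (2:ℝ) (j+1), ← zpow_neg]
  push_cast
  ring_nf

lemma two_zpow_nat (n : ℕ) : (2 : ℝ) ^ (-(n : ℤ)) = (1/2 : ℝ) ^ n := by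
  rw [one_div, inv_pow, ← zpow_natCast (2:ℝ) n, ← zpow_neg]

lemma kterm_abs (y : Cant) (j : ℕ) : |kterm y j| = (2 : ℝ) ^ (-(j + 1 : ℤ)) := by
  rw [kterm, abs_mul, abs_pow, abs_neg, abs_one, one_pow, one_mul, abs_of_pos (by positivity)]

lemma mem_ksupp {y : Cant} {m : ℕ} (h : 0 < m) : m ∈ ksupp y ↔ y ⟨m, h⟩ = true := by
  constructor
  · rintro ⟨h', hy⟩; exact hy
  · intro hy; exact ⟨h, hy⟩

lemma zero_not_mem_ksupp (y : Cant) : (0 : ℕ) ∉ ksupp y := by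
  rintro ⟨h, -⟩
  exact lt_irrefl 0 h

lemma ksupp_update' {y : Cant} (c : ℕ+) :
    ksupp (Function.update y c true) = insert (c : ℕ) (ksupp y) := by
  ext m
  simp only [ksupp, Set.mem_setOf_eq, Set.mem_insert_iff]
  constructor
  · rintro ⟨hm, hy⟩
    rcases eq_or_ne (⟨m, hm⟩ : ℕ+) c with h | h
    · left; exact congrArg (fun t : ℕ+ => (t : ℕ)) h
    · right; exact ⟨hm, (Function.update_of_ne h true y).symm.trans hy⟩
  · rintro (rfl | ⟨hm, hy⟩)
    · refine ⟨c.pos, ?_⟩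
      have hh : (⟨(c:ℕ), c.pos⟩ : ℕ+) = c := rfl
      rw [hh, Function.update_self]
    · refine ⟨hm, ?_⟩
      rcases eq_or_ne (⟨m, hm⟩ : ℕ+) c with h | h
      · rw [h]; simp
      · exact (Function.update_of_ne h true y).trans hy

lemma nth_agree {P Q : ℕ → Prop} (hP : (setOf P).Finite) {j : ℕ} (hj : j < hP.toFinset.card)
    {c : ℕ} (hPc : ∀ m, P m → m < c) (hag : ∀ m < c, (P m ↔ Q m)) :
    Nat.nth Q j = Nat.nth P j := by
  set n := Nat.nth P j with hn
  have hPn : P n := Nat.nth_mem_of_lt_card hP hj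
  have hcount : Nat.count P n = j := Nat.count_nth_of_lt_card_finite hP hj
  have hnc : n < c := hPc n hPn
  have hQn : Q n := (hag n hnc).1 hPn
  have hcQ : Nat.count Q n = j := by
    rw [← hcount]
    rw [Nat.count_eq_card_filter_range, Nat.count_eq_card_filter_range]
    congr 1
    apply Finset.filter_congr
    intro m hm
    simp only [Finset.mem_range] at hm
    simp [hag m (lt_trans hm hnc)]
  have := Nat.nth_count hQn
  rw [hcQ] at this
  exact this

lemma kf_finite {y : Cant} (hf : (ksupp y).Finite) :
    kf y = ∑ j ∈ Finset.range ((ksupp y).ncard), kterm y j := by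
  rw [kf]
  rw [tsum_eq_sum (s := Finset.range ((ksupp y).ncard))]
  · exact Finset.sum_congr rfl fun j hj => by
      rw [Finset.mem_range] at hj; rw [if_pos (Or.inr hj)]; rfl
  · intro j hj
    rw [Finset.mem_range] at hj
    rw [if_neg]
    rintro (h | h)
    · exact Set.not_infinite.2 hf h
    · exact hj h

lemma kterm_summable (y : Cant) : Summable (kterm y) := by
  apply Summable.of_norm_bounded (g := fun j : ℕ => (1/2:ℝ)^(j+1))
  · have := summable_geometric_two.mul_left (1/2 : ℝ)
    apply this.congr
    intro j
    rw [pow_succ]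
    ring
  · intro j
    rw [Real.norm_eq_abs, kterm_abs, two_zpow_eq]

lemma kf_hasSum {y : Cant} (hf : (ksupp y).Infinite) :
    HasSum (kterm y) (kf y) := by
  have : kf y = ∑' j, kterm y j := by
    rw [kf]; exact tsum_congr fun j => by rw [if_pos (Or.inl hf)]; rfl
  rw [this]
  exact (kterm_summable y).hasSum

def kp (y : Cant) : ℕ → Prop := (· ∈ ksupp y)

lemma setOf_kp (y : Cant) : setOf (kp y) = ksupp y := rfl

lemma kterm_kp (y : Cant) (j : ℕ) :
    kterm y j = (-1 : ℝ) ^ (Nat.nth (kp y) j) * (2 : ℝ) ^ (-(j + 1 : ℤ)) := rfl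

lemma count_eq_card {P : ℕ → Prop} (hP : (setOf P).Finite) {c : ℕ}
    (hPc : ∀ m, P m → m < c) : Nat.count P c = hP.toFinset.card := by
  rw [Nat.count_eq_card_filter_range]
  congr 1
  ext m
  simp only [Finset.mem_filter, Finset.mem_range, Set.Finite.mem_toFinset, Set.mem_setOf_eq]
  exact ⟨fun h => h.2, fun h => ⟨hPc m h, h⟩⟩

lemma count_congr {P Q : ℕ → Prop} {c : ℕ} (hag : ∀ m < c, (P m ↔ Q m)) :
    Nat.count P c = Nat.count Q c := by
  rw [Nat.count_eq_card_filter_range, Nat.count_eq_card_filter_range]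
  congr 1
  apply Finset.filter_congr
  intro m hm
  simp only [Finset.mem_range] at hm
  simp [hag m hm]

lemma nth_agree' {S : Set ℕ} {T : Set ℕ} (hS : S.Finite) {j : ℕ} (hj : j < S.ncard)
    {c : ℕ} (hSc : ∀ m ∈ S, m < c) (hag : ∀ m < c, (m ∈ S ↔ m ∈ T)) :
    Nat.nth (· ∈ T) j = Nat.nth (· ∈ S) j := by
  have hP : (setOf (· ∈ S)).Finite := by exact hS
  have hcard : hP.toFinset.card = S.ncard := by
    have h2 : {x | x ∈ S} = S := Set.setOf_mem_eq
    rw [← Set.ncard_eq_toFinset_card _ hP]; exact congrArg Set.ncard h2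
  exact nth_agree hP (hcard ▸ hj) hSc hag

lemma kf_update' {y : Cant} (hf : (ksupp y).Finite) (c : ℕ+)
    (hc : ∀ m ∈ ksupp y, m < (c : ℕ)) :
    kf (Function.update y c true)
      = kf y + (-1 : ℝ) ^ (c : ℕ) * (2 : ℝ) ^ (-((ksupp y).ncard + 1 : ℤ)) := by
  set y' := Function.update y c true with hy'
  set k := (ksupp y).ncard with hk
  have hsupp' : ksupp y' = insert (c : ℕ) (ksupp y) := ksupp_update' c
  have hcn : (c : ℕ) ∉ ksupp y := fun h => lt_irrefl _ (hc _ h)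
  have hf' : (ksupp y').Finite := by rw [hsupp']; exact hf.insert _
  have hcard : (ksupp y').ncard = k + 1 := by
    rw [hsupp', Set.ncard_insert_of_notMem hcn hf]
  have hag : ∀ m < (c : ℕ), (m ∈ ksupp y ↔ m ∈ ksupp y') := by
    intro m hm
    rw [hsupp', Set.mem_insert_iff]
    exact ⟨Or.inr, fun h => h.elim (fun h' => absurd h' (Nat.ne_of_lt hm)) id⟩
  have hfP : (setOf (kp y)).Finite := by rwa [setOf_kp]
  have hnth_top : Nat.nth (kp y') k = (c : ℕ) := by
    have hQc : kp y' (c : ℕ) := by rw [kp, hsupp']; exact Set.mem_insert _ _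
    have hcQ : Nat.count (kp y') (c : ℕ) = k := by
      rw [← count_congr (P := kp y) (Q := kp y') hag]
      rw [count_eq_card hfP hc, ← Set.ncard_eq_toFinset_card _ hfP, setOf_kp]
    have := Nat.nth_count hQc
    rwa [hcQ] at this
  rw [kf_finite hf', kf_finite hf, hcard, ← hk, Finset.sum_range_succ]
  have h1 : ∀ j ∈ Finset.range k, kterm y' j = kterm y j := by
    intro j hj
    rw [Finset.mem_range] at hj
    rw [kterm_kp, kterm_kp,
      show Nat.nth (kp y') j = Nat.nth (kp y) j from nth_agree' hf hj hc hag]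
  rw [Finset.sum_congr rfl h1]
  congr 1
  rw [kterm_kp, hnth_top]

lemma open_nbhd {S : Set KG} (hS : IsOpen S) {y : Cant} (hy : mkG y ∈ S) :
    ∃ n : ℕ, ∃ ε : ℝ, 0 < ε ∧ ∀ z : Cant, (∀ i : ℕ+, (i : ℕ) ≤ n → z i = y i) →
      |kf z - kf y| < ε → mkG z ∈ S := by
  obtain ⟨O, hO, hOS⟩ := isOpen_induced_iff.1 hS
  have hyO : ((y, kf y) : Cant × ℝ) ∈ O := by
    have : mkG y ∈ Subtype.val ⁻¹' O := by rw [hOS]; exact hy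
    exact this
  obtain ⟨u, v, hu, hv, hyu, hyv, huv⟩ := isOpen_prod_iff.1 hO y (kf y) hyO
  obtain ⟨ε, hε, hball⟩ := Metric.isOpen_iff.1 hv (kf y) hyv
  obtain ⟨I, t, hI, hIu⟩ := isOpen_pi_iff.1 hu y hyu
  refine ⟨I.sup (fun i => (i : ℕ)), ε, hε, fun z hagree hdist => ?_⟩
  have hzu : z ∈ u := by
    apply hIu
    intro i hi
    rw [hagree i (Finset.le_sup hi)]
    exact (hI i hi).2
  have hzv : kf z ∈ v := by
    apply hball
    rw [Metric.mem_ball, Real.dist_eq]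
    exact hdist
  have : ((z, kf z) : Cant × ℝ) ∈ O := huv (Set.mk_mem_prod hzu hzv)
  rw [← hOS]
  exact this

def side (U : Set KG) (b : Bool) : Set KG := cond b U Uᶜ

lemma side_isOpen {U : Set KG} (hU : IsClopen U) (b : Bool) : IsOpen (side U b) := by
  cases b
  · exact hU.isClosed.isOpen_compl
  · exact hU.isOpen

lemma side_isClosed {U : Set KG} (hU : IsClopen U) (b : Bool) : IsClosed (side U b) := by
  cases b
  · exact hU.isOpen.isClosed_compl
  · exact hU.isClosed

lemma side_not (U : Set KG) (b : Bool) : side U (!b) = (side U b)ᶜ := by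
  cases b <;> simp [side]

noncomputable def sgn (s : Bool) : ℝ := cond s 1 (-1)

structure St (U : Set KG) : Type where
  y : Cant
  k : ℕ
  B : ℕ
  b : Bool
  w : Cant
  nt : ℕ
  T : ℝ
  s : Bool
  hfin : (ksupp y).Finite
  hk : (ksupp y).ncard = k
  hbd : ∀ m ∈ ksupp y, m ≤ B
  hnt : nt ≤ B
  hmem : mkG y ∈ side U b
  hdir : T - kf y = sgn s * (2 : ℝ) ^ (-(k : ℤ))
  htrap : ∀ z : Cant, (∀ i : ℕ+, (i : ℕ) ≤ nt → z i = w i) → kf z = T →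
    mkG z ∈ side U (!b)
  hagw : ∀ i : ℕ+, (i : ℕ) ≤ nt → y i = w i

/-- parity helper: an even and an odd number above any bound -/
lemma exists_good_coord (B : ℕ) (s : Bool) :
    ∃ c : ℕ+, B < (c : ℕ) ∧ (-1 : ℝ) ^ (c : ℕ) = sgn s := by
  cases s
  · refine ⟨⟨2 * B + 1, by omega⟩, by simp; omega, ?_⟩
    rw [show sgn false = -1 from rfl]
    rw [PNat.mk_coe]
    exact Odd.neg_one_pow ⟨B, by ring⟩
  · refine ⟨⟨2 * B + 2, by omega⟩, by simp; omega, ?_⟩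
    rw [show sgn true = 1 from rfl]
    rw [PNat.mk_coe]
    exact Even.neg_one_pow ⟨B + 1, by ring⟩

/-- one construction step -/
lemma step_ex {U : Set KG} (hU : IsClopen U) (σ : St U) :
    ∃ σ' : St U, σ'.k = σ.k + 1 ∧ σ.B < σ'.B ∧
      (∃ c : ℕ+, σ.B < (c : ℕ) ∧ σ'.y = Function.update σ.y c true) ∧
      (σ'.b = σ.b → σ'.w = σ.w ∧ σ'.nt = σ.nt ∧ σ'.T = σ.T) := by
  classical
  -- generic facts for a point updated at c > B
  have key : ∀ c : ℕ+, σ.B < (c : ℕ) → ((-1:ℝ)^(c:ℕ) = sgn σ.s) →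
      (ksupp (Function.update σ.y c true)).Finite ∧
      (ksupp (Function.update σ.y c true)).ncard = σ.k + 1 ∧
      (∀ m ∈ ksupp (Function.update σ.y c true), m ≤ (c:ℕ)) ∧
      kf (Function.update σ.y c true) = kf σ.y + sgn σ.s * (2:ℝ) ^ (-(σ.k+1 : ℤ)) ∧
      σ.T - kf (Function.update σ.y c true) = sgn σ.s * (2:ℝ) ^ (-(σ.k+1 : ℤ)) := by
    intro c hcB hpar
    have hlt : ∀ m ∈ ksupp σ.y, m < (c:ℕ) := fun m hm => lt_of_le_of_lt (σ.hbd m hm) hcB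
    have hcn : (c:ℕ) ∉ ksupp σ.y := fun h => lt_irrefl _ (hlt _ h)
    have hsupp : ksupp (Function.update σ.y c true) = insert (c:ℕ) (ksupp σ.y) :=
      ksupp_update' c
    have hfin' : (ksupp (Function.update σ.y c true)).Finite := by
      rw [hsupp]; exact σ.hfin.insert _
    have hk' : (ksupp (Function.update σ.y c true)).ncard = σ.k + 1 := by
      rw [hsupp, Set.ncard_insert_of_notMem hcn σ.hfin, σ.hk]
    have hbd' : ∀ m ∈ ksupp (Function.update σ.y c true), m ≤ (c:ℕ) := by
      intro m hm
      rw [hsupp] at hm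
      rcases hm with rfl | hm
      · exact le_refl _
      · exact le_of_lt (hlt m hm)
    have hkf : kf (Function.update σ.y c true)
        = kf σ.y + sgn σ.s * (2:ℝ) ^ (-(σ.k+1 : ℤ)) := by
      rw [kf_update' σ.hfin c hlt, hpar, σ.hk]
    refine ⟨hfin', hk', hbd', hkf, ?_⟩
    rw [hkf]
    have hd := σ.hdir
    have h2 : (2:ℝ) ^ (-(σ.k:ℤ)) = 2 * (2:ℝ) ^ (-(σ.k:ℤ) - 1) := by
      rw [sub_eq_add_neg, zpow_add₀ (two_ne_zero : (2:ℝ) ≠ 0)]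
      simp
      ring
    have he : (-(σ.k+1 : ℤ)) = -(σ.k:ℤ) - 1 := by push_cast; ring
    rw [he]
    rw [he] at *
    calc σ.T - (kf σ.y + sgn σ.s * (2:ℝ) ^ (-(σ.k:ℤ) - 1))
        = (σ.T - kf σ.y) - sgn σ.s * (2:ℝ) ^ (-(σ.k:ℤ) - 1) := by ring
      _ = sgn σ.s * (2:ℝ) ^ (-(σ.k:ℤ)) - sgn σ.s * (2:ℝ) ^ (-(σ.k:ℤ) - 1) := by rw [hd]
      _ = sgn σ.s * (2:ℝ) ^ (-(σ.k:ℤ) - 1) := by rw [h2]; ring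
  by_cases h : ∃ c : ℕ+, σ.B < (c : ℕ) ∧ ((-1:ℝ)^(c:ℕ) = sgn σ.s) ∧
      mkG (Function.update σ.y c true) ∈ side U σ.b
  · obtain ⟨c, hcB, hpar, hmem'⟩ := h
    obtain ⟨hfin', hk', hbd', hkf, hdir'⟩ := key c hcB hpar
    refine ⟨⟨Function.update σ.y c true, σ.k + 1, (c:ℕ), σ.b, σ.w, σ.nt, σ.T, σ.s,
      hfin', hk', hbd', le_trans σ.hnt (le_of_lt hcB), hmem', ?_, σ.htrap, ?_⟩,
      rfl, hcB, ⟨c, hcB, rfl⟩, fun _ => ⟨rfl, rfl, rfl⟩⟩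
    · rw [hdir']; push_cast; ring_nf
    · intro i hi
      rw [Function.update_of_ne, σ.hagw i hi]
      intro hic
      rw [hic] at hi
      have h1 : (c:ℕ) ≤ σ.nt := hi
      have h2 := σ.hnt
      omega
  · push_neg at h
    obtain ⟨n1, ε1, hε1, hnb⟩ := open_nbhd (side_isOpen hU σ.b) σ.hmem
    obtain ⟨c, hcB, hpar⟩ := exists_good_coord (max σ.B n1) σ.s
    have hcB' : σ.B < (c:ℕ) := lt_of_le_of_lt (le_max_left _ _) hcB
    have hcn1 : n1 < (c:ℕ) := lt_of_le_of_lt (le_max_right _ _) hcB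
    obtain ⟨hfin', hk', hbd', hkf, hdir'⟩ := key c hcB' hpar
    have hmem' : mkG (Function.update σ.y c true) ∈ side U (!σ.b) := by
      rw [side_not]
      exact h c hcB' hpar
    refine ⟨⟨Function.update σ.y c true, σ.k + 1, (c:ℕ), !σ.b, σ.y, n1, kf σ.y, !σ.s,
      hfin', hk', hbd', le_of_lt hcn1, hmem', ?_, ?_, ?_⟩,
      rfl, hcB', ⟨c, hcB', rfl⟩, ?_⟩
    · -- hdir for switch
      rw [hkf]
      cases σ.s <;> simp [sgn] <;> push_cast <;> ring_nf
    · -- htrap for switch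
      intro z hzag hzT
      rw [Bool.not_not]
      apply hnb z hzag
      rw [hzT]
      simpa using hε1
    · -- hagw
      intro i hi
      rw [Function.update_of_ne]
      intro hic
      rw [hic] at hi
      have : (c:ℕ) ≤ n1 := hi
      omega
    · intro hb
      have hb' : (!σ.b) = σ.b := hb
      simp at hb'


section Run

variable {U : Set KG} (hU : IsClopen U) (σ0 : St U)

noncomputable def seq : ℕ → St U
  | 0 => σ0
  | i + 1 => (step_ex hU (seq i)).choose

lemma seq_spec (i : ℕ) :
    (seq hU σ0 (i+1)).k = (seq hU σ0 i).k + 1 ∧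
    (seq hU σ0 i).B < (seq hU σ0 (i+1)).B ∧
    (∃ c : ℕ+, (seq hU σ0 i).B < (c : ℕ) ∧
      (seq hU σ0 (i+1)).y = Function.update (seq hU σ0 i).y c true) ∧
    ((seq hU σ0 (i+1)).b = (seq hU σ0 i).b →
      (seq hU σ0 (i+1)).w = (seq hU σ0 i).w ∧ (seq hU σ0 (i+1)).nt = (seq hU σ0 i).nt ∧
      (seq hU σ0 (i+1)).T = (seq hU σ0 i).T) :=
  (step_ex hU (seq hU σ0 i)).choose_spec

lemma seq_k (i : ℕ) : (seq hU σ0 i).k = σ0.k + i := by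
  induction i with
  | zero => rfl
  | succ i ih => rw [(seq_spec hU σ0 i).1, ih]; omega

lemma B_strictMono : StrictMono (fun i => (seq hU σ0 i).B) :=
  strictMono_nat_of_lt_succ (fun i => (seq_spec hU σ0 i).2.1)

lemma agree_of_le {i j : ℕ} (hij : i ≤ j) (m : ℕ+) (hm : (m : ℕ) ≤ (seq hU σ0 i).B) :
    (seq hU σ0 j).y m = (seq hU σ0 i).y m := by
  induction j with
  | zero =>
    have : i = 0 := Nat.le_zero.1 hij
    rw [this]
  | succ j ih =>
    rcases Nat.lt_or_ge i (j+1) with h | h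
    · have hij' : i ≤ j := Nat.lt_succ_iff.1 h
      obtain ⟨c, hc, hy⟩ := (seq_spec hU σ0 j).2.2.1
      rw [hy, Function.update_of_ne, ih hij']
      intro hmc
      rw [hmc] at hm
      have h1 : (seq hU σ0 i).B ≤ (seq hU σ0 j).B := (B_strictMono hU σ0).monotone hij'
      have h2 : (c:ℕ) ≤ (seq hU σ0 i).B := hm
      omega
    · have : i = j + 1 := le_antisymm hij h
      rw [this]

lemma mono_supp {i j : ℕ} (hij : i ≤ j) (m : ℕ+) (hm : (seq hU σ0 i).y m = true) :
    (seq hU σ0 j).y m = true := by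
  induction j with
  | zero => rwa [Nat.le_zero.1 hij] at hm
  | succ j ih =>
    rcases Nat.lt_or_ge i (j+1) with h | h
    · obtain ⟨c, hc, hy⟩ := (seq_spec hU σ0 j).2.2.1
      rw [hy]
      rcases eq_or_ne m c with rfl | hne
      · simp
      · rw [Function.update_of_ne hne]
        exact ih (Nat.lt_succ_iff.1 h)
    · rwa [le_antisymm hij h] at hm

noncomputable def Zlim : Cant :=
  fun m => if ∃ i, (seq hU σ0 i).y m = true then true else false

lemma Zlim_agree (i : ℕ) (m : ℕ+) (hm : (m : ℕ) ≤ (seq hU σ0 i).B) :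
    Zlim hU σ0 m = (seq hU σ0 i).y m := by
  by_cases h : ∃ j, (seq hU σ0 j).y m = true
  · obtain ⟨j, hj⟩ := h
    have hY : (seq hU σ0 i).y m = true := by
      rcases le_or_gt j i with hji | hij
      · exact mono_supp hU σ0 hji m hj
      · rw [← agree_of_le hU σ0 (le_of_lt hij) m hm]
        exact hj
    rw [hY, Zlim, if_pos ⟨j, hj⟩]
  · have hY : (seq hU σ0 i).y m = false := by
      cases hYm : (seq hU σ0 i).y m
      · rfl
      · exact absurd ⟨i, hYm⟩ h
    rw [hY, Zlim, if_neg h]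

lemma Zlim_supp_agree (i : ℕ) (m : ℕ) (hm : m ≤ (seq hU σ0 i).B) :
    (m ∈ ksupp (seq hU σ0 i).y ↔ m ∈ ksupp (Zlim hU σ0)) := by
  rcases Nat.eq_zero_or_pos m with rfl | hpos
  · simp [zero_not_mem_ksupp]
  · rw [mem_ksupp hpos, mem_ksupp hpos,
      Zlim_agree hU σ0 i ⟨m, hpos⟩ hm]

lemma Zlim_infinite : (ksupp (Zlim hU σ0)).Infinite := by
  intro hf
  set n := (ksupp (Zlim hU σ0)).ncard
  have hsub : ksupp (seq hU σ0 (n+1)).y ⊆ ksupp (Zlim hU σ0) := by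
    intro m hm
    exact (Zlim_supp_agree hU σ0 (n+1) m ((seq hU σ0 (n+1)).hbd m hm)).1 hm
  have hcard := Set.ncard_le_ncard hsub hf
  rw [(seq hU σ0 (n+1)).hk, seq_k hU σ0 (n+1)] at hcard
  omega

lemma kf_partial (i : ℕ) :
    kf (seq hU σ0 i).y = ∑ j ∈ Finset.range (σ0.k + i), kterm (Zlim hU σ0) j := by
  rw [kf_finite (seq hU σ0 i).hfin, (seq hU σ0 i).hk, seq_k hU σ0 i]
  apply Finset.sum_congr rfl
  intro j hj
  rw [Finset.mem_range] at hj
  have hj' : j < (ksupp (seq hU σ0 i).y).ncard := by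
    rw [(seq hU σ0 i).hk, seq_k hU σ0 i]; exact hj
  rw [kterm_def, kterm_def, nth_agree' (seq hU σ0 i).hfin hj'
    (c := (seq hU σ0 i).B + 1)
    (fun m hm => Nat.lt_succ_of_le ((seq hU σ0 i).hbd m hm))
    (fun m hm => Zlim_supp_agree hU σ0 i m (Nat.lt_succ_iff.1 hm))]

lemma tendsto_kfY :
    Tendsto (fun i => kf (seq hU σ0 i).y) atTop (𝓝 (kf (Zlim hU σ0))) := by
  have h1 := (kf_hasSum (Zlim_infinite hU σ0)).tendsto_sum_nat
  have h2 : Tendsto (fun i : ℕ => σ0.k + i) atTop atTop :=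
    (tendsto_add_atTop_nat σ0.k).congr (fun n => add_comm n σ0.k)
  have h3 := h1.comp h2
  apply h3.congr
  intro i
  exact (kf_partial hU σ0 i).symm

lemma tendsto_Y : Tendsto (fun i => (seq hU σ0 i).y) atTop (𝓝 (Zlim hU σ0)) := by
  rw [tendsto_pi_nhds]
  intro m
  apply Tendsto.congr' _ (tendsto_const_nhds (x := Zlim hU σ0 m))
  rw [Filter.EventuallyEq, eventually_atTop]
  refine ⟨(m : ℕ), fun i hi => ?_⟩
  have hB : (m : ℕ) ≤ (seq hU σ0 i).B := by
    calc (m:ℕ) ≤ i := hi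
    _ ≤ (seq hU σ0 i).B := (B_strictMono hU σ0).le_apply
  exact Zlim_agree hU σ0 i m hB

lemma tendsto_G :
    Tendsto (fun i => mkG (seq hU σ0 i).y) atTop (𝓝 (mkG (Zlim hU σ0))) := by
  rw [tendsto_subtype_rng]
  exact (tendsto_Y hU σ0).prodMk_nhds (tendsto_kfY hU σ0)

end Run

lemma no_clopen {U : Set KG} (hU : IsClopen U) (σ0 : St U) : False := by
  classical
  by_cases hst : ∃ i0, ∀ j, i0 ≤ j → (seq hU σ0 j).b = (seq hU σ0 i0).b
  · obtain ⟨i0, hi0⟩ := hst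
    -- fields are preserved from i0 on
    have hpres : ∀ j, i0 ≤ j → (seq hU σ0 j).w = (seq hU σ0 i0).w ∧
        (seq hU σ0 j).nt = (seq hU σ0 i0).nt ∧ (seq hU σ0 j).T = (seq hU σ0 i0).T := by
      intro j hj
      induction j with
      | zero =>
        have : i0 = 0 := Nat.le_zero.1 hj
        rw [this]
        exact ⟨rfl, rfl, rfl⟩
      | succ j ih =>
        rcases lt_or_ge i0 (j+1) with h | h
        · have hj' : i0 ≤ j := Nat.lt_succ_iff.1 h
          have hbj : (seq hU σ0 (j+1)).b = (seq hU σ0 j).b := by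
            rw [hi0 (j+1) hj, hi0 j hj']
          obtain ⟨hw, hnt, hT⟩ := (seq_spec hU σ0 j).2.2.2 hbj
          obtain ⟨hw', hnt', hT'⟩ := ih hj'
          exact ⟨hw.trans hw', hnt.trans hnt', hT.trans hT'⟩
        · have : i0 = j + 1 := le_antisymm hj h
          rw [this]
          exact ⟨rfl, rfl, rfl⟩
    -- kf of the limit equals the target T
    have hTlim : Tendsto (fun j => kf (seq hU σ0 j).y) atTop (𝓝 ((seq hU σ0 i0).T)) := by
      rw [← tendsto_sub_nhds_zero_iff]
      refine squeeze_zero_norm' (a := fun j => (1/2:ℝ)^σ0.k * (1/2:ℝ)^j) ?_ ?_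
      · rw [eventually_atTop]
        refine ⟨i0, fun j hj => ?_⟩
        have hd := (seq hU σ0 j).hdir
        rw [(hpres j hj).2.2] at hd
        have : kf (seq hU σ0 j).y - (seq hU σ0 i0).T
            = -(sgn (seq hU σ0 j).s) * (2:ℝ) ^ (-((seq hU σ0 j).k : ℤ)) := by
          linarith
        rw [Real.norm_eq_abs, this, abs_mul, abs_neg]
        have habs : |sgn (seq hU σ0 j).s| = 1 := by
          cases (seq hU σ0 j).s <;> simp [sgn]
        rw [habs, one_mul, abs_of_pos (by positivity), seq_k hU σ0 j, two_zpow_nat]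
        rw [pow_add]
      · have h0 : Tendsto (fun j : ℕ => (1/2:ℝ)^j) atTop (𝓝 0) := by
          apply tendsto_pow_atTop_nhds_zero_of_lt_one <;> norm_num
        have := h0.const_mul ((1/2:ℝ)^σ0.k)
        simpa using this
    have hZT : kf (Zlim hU σ0) = (seq hU σ0 i0).T :=
      tendsto_nhds_unique (tendsto_kfY hU σ0) hTlim
    -- limit is in side b
    have h1 : mkG (Zlim hU σ0) ∈ side U ((seq hU σ0 i0).b) := by
      apply (side_isClosed hU _).mem_of_tendsto (tendsto_G hU σ0)
      rw [eventually_atTop]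
      refine ⟨i0, fun j hj => ?_⟩
      have := (seq hU σ0 j).hmem
      rwa [hi0 j hj] at this
    -- limit is in the trap
    have h2 : mkG (Zlim hU σ0) ∈ side U (!(seq hU σ0 i0).b) := by
      apply (seq hU σ0 i0).htrap _ _ hZT
      intro i hi
      have hB : (i : ℕ) ≤ (seq hU σ0 i0).B := le_trans hi (seq hU σ0 i0).hnt
      rw [Zlim_agree hU σ0 i0 i hB]
      exact (seq hU σ0 i0).hagw i hi
    rw [side_not] at h2
    exact h2 h1
  · push_neg at hst
    have hfreq : ∀ v : Bool, ∃ᶠ j in atTop, (seq hU σ0 j).b = v := by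
      intro v
      rw [frequently_atTop]
      intro i
      by_cases hbi : (seq hU σ0 i).b = v
      · exact ⟨i, le_refl i, hbi⟩
      · obtain ⟨j, hij, hne⟩ := hst i
        refine ⟨j, hij, ?_⟩
        revert hne hbi
        cases (seq hU σ0 j).b <;> cases (seq hU σ0 i).b <;> cases v <;> simp
    have hmemU : mkG (Zlim hU σ0) ∈ U := by
      have hcl : mkG (Zlim hU σ0) ∈ closure U := by
        apply mem_closure_of_frequently_of_tendsto _ (tendsto_G hU σ0)
        apply (hfreq true).mono
        intro j hj
        have := (seq hU σ0 j).hmem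
        rwa [hj] at this
      rwa [hU.isClosed.closure_eq] at hcl
    have hmemUc : mkG (Zlim hU σ0) ∈ Uᶜ := by
      have hcl : mkG (Zlim hU σ0) ∈ closure Uᶜ := by
        apply mem_closure_of_frequently_of_tendsto _ (tendsto_G hU σ0)
        apply (hfreq false).mono
        intro j hj
        have := (seq hU σ0 j).hmem
        rwa [hj] at this
      rwa [(hU.compl).isClosed.closure_eq] at hcl
    exact hmemUc hmemU

/-- If `x ∈ D` then the point `(x, f(x))` does not have a neighbourhood basis of clopen
sets in the graph `G` of Kuratowski's function: some neighbourhood `N` of `(x, f(x))`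
contains no clopen set `U` with `(x, f(x)) ∈ U ⊆ N`
(so `ind_{(x,f(x))} G ≥ 1`). -/
theorem graph_kf_no_clopen_basis_at_D (x : Cant) (hx : (ksupp x).Finite) :
    ∃ N ∈ 𝓝 (⟨(x, kf x), rfl⟩ : {p : Cant × ℝ // p.2 = kf p.1}),
      ∀ U : Set {p : Cant × ℝ // p.2 = kf p.1},
        IsClopen U → (⟨(x, kf x), rfl⟩ : {p : Cant × ℝ // p.2 = kf p.1}) ∈ U → ¬ U ⊆ N := by
  classical
  set k0 := (ksupp x).ncard with hk0
  set δ : ℝ := (2:ℝ)^(-(k0+1 : ℤ)) with hδ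
  have hδpos : 0 < δ := by positivity
  set N : Set KG := (fun p : KG => p.val.2) ⁻¹' Metric.ball (kf x) δ with hN
  have hNopen : IsOpen N :=
    (Metric.isOpen_ball).preimage (continuous_snd.comp continuous_subtype_val)
  have hptN : (⟨(x, kf x), rfl⟩ : KG) ∈ N := by
    simp [hN, Metric.mem_ball, hδpos]
  refine ⟨N, hNopen.mem_nhds hptN, ?_⟩
  intro U hU hxU hsub
  -- build the initial state
  obtain ⟨n0, ε0, hε0, h0⟩ := open_nbhd hU.isOpen (show mkG x ∈ U from hxU)
  obtain ⟨Bs, hBs⟩ : ∃ B, ∀ m ∈ ksupp x, m ≤ B := by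
    obtain ⟨B, hB⟩ := hx.bddAbove
    exact ⟨B, fun m hm => hB hm⟩
  set B0 := max n0 Bs with hB0
  set c0 : ℕ+ := ⟨2*B0+2, by omega⟩ with hc0
  have hc0val : (c0 : ℕ) = 2*B0+2 := rfl
  have hlt : ∀ m ∈ ksupp x, m < (c0:ℕ) := by
    intro m hm
    have := hBs m hm
    have h2 : Bs ≤ B0 := le_max_right _ _
    omega
  have hc0n : (c0:ℕ) ∉ ksupp x := fun h => lt_irrefl _ (hlt _ h)
  set u0 := Function.update x c0 true with hu0def
  have hpar : (-1:ℝ)^(c0:ℕ) = 1 := by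
    rw [hc0val]
    exact Even.neg_one_pow ⟨B0+1, by ring⟩
  have hkfu : kf u0 = kf x + δ := by
    rw [hu0def, kf_update' hx c0 hlt, hpar, one_mul, ← hk0, hδ]
  have hsupp : ksupp u0 = insert (c0:ℕ) (ksupp x) := ksupp_update' c0
  have hu0mem : mkG u0 ∈ Uᶜ := by
    intro h
    have := hsub h
    rw [hN] at this
    simp only [Set.mem_preimage, Metric.mem_ball] at this
    rw [show (mkG u0).val.2 = kf u0 from rfl, Real.dist_eq, hkfu] at this
    simp only [add_sub_cancel_left] at this
    rw [abs_of_pos hδpos] at this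
    exact lt_irrefl δ this
  have hn0B : n0 ≤ 2*B0+2 := by
    have : n0 ≤ B0 := le_max_left _ _
    omega
  refine no_clopen hU ⟨u0, k0+1, 2*B0+2, false, x, n0, kf x, false,
    ?_, ?_, ?_, hn0B, hu0mem, ?_, ?_, ?_⟩
  · rw [hsupp]; exact hx.insert _
  · rw [hsupp, Set.ncard_insert_of_notMem hc0n hx]
  · intro m hm
    rw [hsupp] at hm
    rcases hm with rfl | hm
    · rw [hc0val]
    · have := hBs m hm
      have h2 : Bs ≤ B0 := le_max_right _ _
      omega
  · rw [hkfu]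
    rw [show sgn false = (-1:ℝ) from rfl, hδ]
    push_cast
    ring_nf
  · intro z hag hzT
    rw [show (!false) = true from rfl]
    rw [show side U true = U from rfl]
    apply h0 z hag
    rw [hzT]
    simpa using hε0
  · intro i hi
    rw [hu0def, Function.update_of_ne]
    intro hic
    rw [hic] at hi
    have h1 : (c0:ℕ) ≤ n0 := hi
    rw [hc0val] at h1
    omega
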